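/- For each k ≥ 1, the function w_k(f) = f_k/(1 - Σ_{j=0}^{k-1} f_j) satisfies ∇w_k · r_i = 0 for every i ≠ k, where r_i is the i-th eigenvector of the discrete velocity traffic system; likewise w_0 = f_0 satisfies ∇w_0 · r_i = 0 for all i ≠ 0. Hence (w_0,…,w_N) is a strict system of (N+1) coordinates diagonalizing the system. -/

import Mathlib

/-- The Riemann invariants `w_0 = f_0`, `w_k = f_k/(1 - Σ_{j<k} f_j)` satisfy
`∇w_k · r_i = 0` for every `i ≠ k` (for `k = 0` the sum below is empty, so `w_0 = f_0`). -/
theorem stmt6 (N : ℕ) (hN : 1 ≤ N) (f : Fin (N+1) → ℝ)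
    (hf : ∀ l, 0 < f l) (hρ : ∑ l, f l < 1)
    (r : Fin (N+1) → Fin (N+1) → ℝ)
    (hr : ∀ i k, r i k = if k < i then 0 else if k = i then 1
      else -f k / (1 - ∑ l ∈ Finset.Iic i, f l)) :
    ∀ k i : Fin (N+1), i ≠ k →
      fderiv ℝ (fun g : Fin (N+1) → ℝ => g k / (1 - ∑ l ∈ Finset.Iio k, g l)) f (r i) = 0 := by
  intro k i hik
  have hsub : ∀ s : Finset (Fin (N+1)), ∑ l ∈ s, f l ≤ ∑ l, f l :=
    fun s => Finset.sum_le_sum_of_subset_of_nonneg (Finset.subset_univ s)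
      (fun l _ _ => (hf l).le)
  have hD : (0:ℝ) < 1 - ∑ l ∈ Finset.Iio k, f l := by
    have := hsub (Finset.Iio k); linarith
  have hT : (0:ℝ) < 1 - ∑ l ∈ Finset.Iic i, f l := by
    have := hsub (Finset.Iic i); linarith
  set L : (Fin (N+1) → ℝ) →L[ℝ] ℝ := ∑ l ∈ Finset.Iio k, ContinuousLinearMap.proj l with hL
  have hLapp : ∀ g : Fin (N+1) → ℝ, L g = ∑ l ∈ Finset.Iio k, g l := by
    intro g; simp [hL]
  have hu : HasFDerivAt (fun g : Fin (N+1) → ℝ => g k)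
      (ContinuousLinearMap.proj k : (Fin (N+1) → ℝ) →L[ℝ] ℝ) f :=
    (ContinuousLinearMap.proj k : (Fin (N+1) → ℝ) →L[ℝ] ℝ).hasFDerivAt
  have hv : HasFDerivAt (fun g : Fin (N+1) → ℝ => 1 - ∑ l ∈ Finset.Iio k, g l) (-L) f := by
    have h1 : HasFDerivAt (fun g : Fin (N+1) → ℝ => 1 - L g) (-L) f := L.hasFDerivAt.const_sub 1
    have : (fun g : Fin (N+1) → ℝ => 1 - L g)
        = (fun g : Fin (N+1) → ℝ => 1 - ∑ l ∈ Finset.Iio k, g l) := by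
      funext g; rw [hLapp]
    rwa [this] at h1
  have hvne : (1 - ∑ l ∈ Finset.Iio k, f l) ≠ 0 := ne_of_gt hD
  have hinv : HasFDerivAt (fun g : Fin (N+1) → ℝ => (1 - ∑ l ∈ Finset.Iio k, g l)⁻¹)
      ((ContinuousLinearMap.smulRight (1 : ℝ →L[ℝ] ℝ)
        (-((1 - ∑ l ∈ Finset.Iio k, f l) ^ 2)⁻¹)).comp (-L)) f :=
    (hasFDerivAt_inv hvne).comp f hv
  have hmul := hu.mul hinv
  have hfe : (fun g : Fin (N+1) → ℝ => g k / (1 - ∑ l ∈ Finset.Iio k, g l))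
      = (fun g : Fin (N+1) → ℝ => g k * (1 - ∑ l ∈ Finset.Iio k, g l)⁻¹) := by
    funext g; rw [div_eq_mul_inv]
  rw [hfe, HasFDerivAt.fderiv (f := fun g : Fin (N+1) → ℝ => g k * (1 - ∑ l ∈ Finset.Iio k, g l)⁻¹) hmul]
  have key : (1 - ∑ l ∈ Finset.Iio k, f l) * r i k
      + f k * ∑ l ∈ Finset.Iio k, r i l = 0 := by
    rcases lt_or_gt_of_ne hik with hlt | hgt
    · -- i < k
      have hlt' : (i:ℕ) < (k:ℕ) := hlt
      have hun : Finset.Iic i ∪ Finset.Ioo i k = Finset.Iio k := by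
        ext a
        simp only [Finset.mem_union, Finset.mem_Iic, Finset.mem_Ioo, Finset.mem_Iio,
          Fin.lt_def, Fin.le_def]
        omega
      have hdisj : Disjoint (Finset.Iic i) (Finset.Ioo i k) := by
        rw [Finset.disjoint_left]
        intro a ha hb
        exact absurd (Finset.mem_Ioo.mp hb).1 (not_lt.mpr (Finset.mem_Iic.mp ha))
      have hsplit : ∀ g : Fin (N+1) → ℝ, ∑ l ∈ Finset.Iio k, g l
          = ∑ l ∈ Finset.Iic i, g l + ∑ l ∈ Finset.Ioo i k, g l := by
        intro g; rw [← hun, Finset.sum_union hdisj]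
      have hIic : ∑ l ∈ Finset.Iic i, r i l = 1 := by
        rw [← Finset.Iio_insert, Finset.sum_insert (by simp)]
        have h0 : ∑ l ∈ Finset.Iio i, r i l = 0 := by
          apply Finset.sum_eq_zero
          intro l hl
          rw [hr]; simp [Finset.mem_Iio.mp hl]
        rw [h0, hr]; simp
      have hIoo : ∑ l ∈ Finset.Ioo i k, r i l
          = -(∑ l ∈ Finset.Ioo i k, f l) / (1 - ∑ l ∈ Finset.Iic i, f l) := by
        have hcong : ∀ l ∈ Finset.Ioo i k, r i l
            = -(f l / (1 - ∑ l ∈ Finset.Iic i, f l)) := by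
          intro l hl
          have h1 : i < l := (Finset.mem_Ioo.mp hl).1
          rw [hr]
          simp [not_lt.mpr h1.le, h1.ne', neg_div]
        rw [Finset.sum_congr rfl hcong, Finset.sum_neg_distrib, ← Finset.sum_div, neg_div]
      have hrik : r i k = -f k / (1 - ∑ l ∈ Finset.Iic i, f l) := by
        rw [hr]; simp [not_lt.mpr hlt.le, hlt.ne']
      rw [hsplit (r i), hIic, hIoo, hrik]
      have hDf := hsplit f
      have hTne : (1 - ∑ l ∈ Finset.Iic i, f l) ≠ 0 := ne_of_gt hT
      field_simp
      rw [hDf]; ring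
    · -- k < i
      have h1 : r i k = 0 := by rw [hr]; simp [hgt]
      have h2 : ∑ l ∈ Finset.Iio k, r i l = 0 := by
        apply Finset.sum_eq_zero
        intro l hl
        rw [hr]; simp [(Finset.mem_Iio.mp hl).trans hgt]
      rw [h1, h2]; ring
  simp only [ContinuousLinearMap.add_apply, ContinuousLinearMap.smul_apply,
    ContinuousLinearMap.comp_apply, ContinuousLinearMap.neg_apply,
    ContinuousLinearMap.smulRight_apply, ContinuousLinearMap.one_apply,
    ContinuousLinearMap.proj_apply, smul_eq_mul, hLapp]
  have hDinv : (1 - ∑ l ∈ Finset.Iio k, f l)⁻¹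
      = (1 - ∑ l ∈ Finset.Iio k, f l) * ((1 - ∑ l ∈ Finset.Iio k, f l) ^ 2)⁻¹ := by
    rw [sq, mul_inv, ← mul_assoc, mul_inv_cancel₀ hvne, one_mul]
  rw [hDinv]
  linear_combination ((1 - ∑ l ∈ Finset.Iio k, f l) ^ 2)⁻¹ * key
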